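/- Let W ⊆ C^ω be a winning condition and M, M' two skeletons over the color set C. If W is M-cycle-consistent, then W is (M ⊗ M')-cycle-consistent, where M ⊗ M' is the direct product skeleton. -/
import Mathlib


/-- Concatenation of a finite word with an infinite word. -/
def app {C : Type*} : List C → (ℕ → C) → (ℕ → C)
  | [], w' => w'
  | c :: u, w' => fun i =>
    match i with
    | 0 => c
    | j + 1 => app u w' j

/-- Extension of the update function of a skeleton to finite words. -/
def updStar {C M : Type*} (upd : M → C → M) (m : M) (w : List C) : M :=
  w.foldl upd m

/-- The infinite word `γ^ω` obtained by repeating a (nonempty) finite word forever. -/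
def periodic {C : Type*} [Inhabited C] (γ : List C) : ℕ → C :=
  fun i => γ.getD (i % γ.length) default

/-- The infinite word obtained by concatenating the (nonempty) finite words
`ws 0, ws 1, ws 2, …`. -/
def concatSeq {C : Type*} [Inhabited C] (ws : ℕ → List C) : ℕ → C :=
  fun i => (((List.range (i + 1)).map ws).flatten).getD i default

/-- `W` is `M`-prefix-independent: any two finite words reaching the same state of the
skeleton from the initial state have the same winning continuations. -/
def PrefIndep {C M : Type*} (upd : M → C → M) (init : M) (W : Set (ℕ → C)) : Prop :=
  ∀ w₁ w₂ : List C, updStar upd init w₁ = updStar upd init w₂ →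
    ∀ w' : ℕ → C, (app w₁ w' ∈ W ↔ app w₂ w' ∈ W)

/-- `W` is `M`-cycle-consistent: after any finite word `w`, any infinite concatenation of
winning (resp. losing) cycles on the state reached by `w` yields a winning (resp. losing)
continuation of `w`. -/
def CycleConsistent {C M : Type*} [Inhabited C] (upd : M → C → M) (init : M)
    (W : Set (ℕ → C)) : Prop :=
  ∀ w : List C, ∀ ws : ℕ → List C,
    (∀ k, ws k ≠ [] ∧ updStar upd (updStar upd init w) (ws k) = updStar upd init w) →
    ((∀ k, app w (periodic (ws k)) ∈ W) → app w (concatSeq ws) ∈ W) ∧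
    ((∀ k, app w (periodic (ws k)) ∉ W) → app w (concatSeq ws) ∉ W)

lemma updStar_prod {C M M' : Type*} (upd : M → C → M) (upd' : M' → C → M')
    (mm : M × M') (w : List C) :
    updStar (fun (mm : M × M') (c : C) => (upd mm.1 c, upd' mm.2 c)) mm w =
      (updStar upd mm.1 w, updStar upd' mm.2 w) := by
  induction w generalizing mm with
  | nil => rfl
  | cons c u ih => simp [updStar, List.foldl] at *; exact ih (upd mm.1 c) (upd' mm.2 c)

/-- If `W` is `M`-cycle-consistent, then `W` is `(M ⊗ M')`-cycle-consistent
for any skeleton `M'`, where the product skeleton updates componentwise. -/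
theorem stmt1 {C M M' : Type*} [Inhabited C] [Finite M] [Finite M']
    (upd : M → C → M) (init : M) (upd' : M' → C → M') (init' : M')
    (W : Set (ℕ → C)) (h : CycleConsistent upd init W) :
    CycleConsistent (fun (mm : M × M') (c : C) => (upd mm.1 c, upd' mm.2 c))
      (init, init') W := by
  intro w ws hws
  apply h
  intro k
  obtain ⟨hne, hc⟩ := hws k
  refine ⟨hne, ?_⟩
  have := congrArg Prod.fst hc
  simpa [updStar_prod] using this
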